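/- Let G be a finite simple graph on 2n vertices. Then D(G,x) = (x^2+2x)^n if and only if G is isomorphic to H∘K_1 for some graph H of order n. -/

import Mathlib

open Polynomial

/-- `S` is a dominating set of the graph `G`: every vertex not in `S` has a neighbor in `S`. -/
def SimpleGraph.IsDomSet {V : Type*} (G : SimpleGraph V) (S : Finset V) : Prop :=
  ∀ v : V, v ∈ S ∨ ∃ u ∈ S, G.Adj u v

open Classical in
/-- The domination polynomial of a finite graph `G`:
`D(G,x) = ∑ d(G,i) xⁱ` where `d(G,i)` is the number of dominating sets of size `i`. -/
noncomputable def domPoly {V : Type*} [Fintype V] (G : SimpleGraph V) : Polynomial ℂ :=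
  ∑ S ∈ Finset.univ.filter (fun S : Finset V => G.IsDomSet S), X ^ S.card

/-- The corona `H ∘ K₁`: attach a pendant vertex `(w, true)` to each vertex
`(w, false)` of `H`. -/
def coronaK1 {W : Type*} (H : SimpleGraph W) : SimpleGraph (W × Bool) :=
  SimpleGraph.fromRel (fun a b =>
    (a.2 = false ∧ b.2 = false ∧ H.Adj a.1 b.1) ∨
    (a.1 = b.1 ∧ a.2 = false ∧ b.2 = true))

namespace CoronaAux

open Finset

set_option linter.unusedSectionVars false

variable {V : Type} [Fintype V]

lemma domset_mono {G : SimpleGraph V} {S T : Finset V} (h : S ⊆ T) (hS : G.IsDomSet S) :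
    G.IsDomSet T := by
  intro v
  rcases hS v with hv | ⟨u, hu, hadj⟩
  · exact Or.inl (h hv)
  · exact Or.inr ⟨u, h hu, hadj⟩

open Classical in
noncomputable def dcount (G : SimpleGraph V) (i : ℕ) : ℕ :=
  (univ.filter fun S : Finset V => G.IsDomSet S ∧ S.card = i).card

open Classical in
lemma domPoly_coeff (G : SimpleGraph V) (i : ℕ) :
    (domPoly G).coeff i = (dcount G i : ℂ) := by
  rw [domPoly, finset_sum_coeff]
  simp only [coeff_X_pow]
  rw [Finset.sum_boole, dcount, Finset.filter_filter]
  congr 2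
  apply Finset.filter_congr
  intro S _
  simp [eq_comm]

open Classical in
lemma total_count (i : ℕ) :
    (univ.filter fun S : Finset V => S.card = i).card = (Fintype.card V).choose i := by
  rw [← Finset.powerset_univ, ← Finset.powersetCard_eq_filter, Finset.card_powersetCard,
    Finset.card_univ]

lemma rhs_eq (n : ℕ) : ((X:ℂ[X]) ^ 2 + 2 * X) ^ n = X ^ n * (X + C 2) ^ n := by
  rw [← mul_pow]
  congr 1
  have h2 : (C (2:ℂ) : ℂ[X]) = 2 := map_ofNat C 2
  rw [mul_add, h2]
  ring

lemma rhs_coeff_lt (n i : ℕ) (h : i < n) : (((X:ℂ[X]) ^ 2 + 2 * X) ^ n).coeff i = 0 := by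
  rw [rhs_eq, coeff_X_pow_mul']
  simp [Nat.not_le.2 h]

lemma rhs_coeff_add (n k : ℕ) :
    (((X:ℂ[X]) ^ 2 + 2 * X) ^ n).coeff (n + k) = 2 ^ (n - k) * (n.choose k : ℂ) := by
  rw [rhs_eq, add_comm n k, coeff_X_pow_mul, coeff_X_add_C_pow]




set_option linter.unusedSectionVars false

variable {W : Type} [Fintype W]

lemma corona_pendant (H : SimpleGraph W) (w : W) :
    (coronaK1 H).Adj (w, false) (w, true) := by
  simp [coronaK1, SimpleGraph.fromRel_adj]

lemma corona_adj_true_iff (H : SimpleGraph W) (u : W × Bool) (w : W) :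
    (coronaK1 H).Adj u (w, true) ↔ u = (w, false) := by
  constructor
  · intro h
    rw [coronaK1, SimpleGraph.fromRel_adj] at h
    obtain ⟨hne, h⟩ := h
    rcases h with (⟨-, hf, -⟩ | ⟨h1, h2, -⟩) | (⟨hf, -⟩ | ⟨-, hf, -⟩)
    · simp at hf
    · exact Prod.ext h1 h2
    · simp at hf
    · simp at hf
  · rintro rfl
    exact corona_pendant H w

lemma corona_dom_iff (H : SimpleGraph W) (S : Finset (W × Bool)) :
    (coronaK1 H).IsDomSet S ↔ ∀ w : W, (w, false) ∈ S ∨ (w, true) ∈ S := by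
  constructor
  · intro hS w
    rcases hS (w, true) with h | ⟨u, hu, hadj⟩
    · exact Or.inr h
    · rw [corona_adj_true_iff] at hadj
      exact Or.inl (hadj ▸ hu)
  · intro h v
    obtain ⟨w, b⟩ := v
    rcases h w with hw | hw
    · cases b
      · exact Or.inl hw
      · exact Or.inr ⟨(w, false), hw, corona_pendant H w⟩
    · cases b
      · exact Or.inr ⟨(w, true), hw, ((coronaK1 H).adj_comm _ _).1 (corona_pendant H w)⟩
      · exact Or.inl hw

open Classical in
lemma domPoly_corona (H : SimpleGraph W) :
    domPoly (coronaK1 H) = ((X : ℂ[X]) ^ 2 + 2 * X) ^ Fintype.card W := by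
  classical
  let t : W → Finset (Finset Bool) := fun _ => (univ : Finset (Finset Bool)).filter (fun T => T.Nonempty)
  have ht : ∀ w, t w = (univ : Finset (Finset Bool)).filter (fun T => T.Nonempty) := fun _ => rfl
  have hsum_t : (∑ T ∈ ((univ : Finset (Finset Bool)).filter (fun T => T.Nonempty)), (X : ℂ[X]) ^ T.card) = X ^ 2 + 2 * X := by
    have htval : ((univ : Finset (Finset Bool)).filter (fun T => T.Nonempty)) = {{false}, {true}, {false, true}} := by
      decide
    rw [htval]
    rw [Finset.sum_insert (by decide), Finset.sum_insert (by decide), Finset.sum_singleton]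
    have c1 : ({false} : Finset Bool).card = 1 := by decide
    have c2 : ({true} : Finset Bool).card = 1 := by decide
    have c3 : ({false, true} : Finset Bool).card = 2 := by decide
    rw [c1, c2, c3]
    ring
  have key : (∑ S ∈ Finset.univ.filter (fun S : Finset (W × Bool) => (coronaK1 H).IsDomSet S),
      (X : ℂ[X]) ^ S.card) = ∑ g ∈ Fintype.piFinset t, ∏ w : W, (X : ℂ[X]) ^ (g w).card := by
    apply Finset.sum_nbij' (i := fun S => fun w => (univ.filter (fun b => (w, b) ∈ S)))
      (j := fun g => univ.filter (fun p : W × Bool => p.2 ∈ g p.1))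
    · intro S hS
      rw [Finset.mem_filter] at hS
      rw [Fintype.mem_piFinset]
      intro w
      rw [ht w, Finset.mem_filter]
      refine ⟨Finset.mem_univ _, ?_⟩
      rcases (corona_dom_iff H S).1 hS.2 w with h | h
      · exact ⟨false, by simpa using h⟩
      · exact ⟨true, by simpa using h⟩
    · intro g hg
      rw [Fintype.mem_piFinset] at hg
      rw [Finset.mem_filter]
      refine ⟨Finset.mem_univ _, (corona_dom_iff H _).2 fun w => ?_⟩
      have := hg w
      rw [ht w, Finset.mem_filter] at this
      obtain ⟨b, hb⟩ := this.2
      cases b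
      · exact Or.inl (by simp [hb])
      · exact Or.inr (by simp [hb])
    · intro S hS
      ext ⟨w, b⟩
      simp
    · intro g hg
      funext w
      ext b
      simp
    · intro S hS
      have hcard : S.card = ∑ w : W, (univ.filter (fun b => (w, b) ∈ S)).card := by
        rw [Finset.card_eq_sum_card_fiberwise (f := Prod.fst) (t := univ) (fun x _ => mem_univ _)]
        refine Finset.sum_congr rfl fun w _ => ?_
        apply Finset.card_bij (i := fun p _ => p.2)
        · intro p hp
          rw [Finset.mem_filter] at hp ⊢
          have : p = (w, p.2) := by
            rw [← hp.2]
          exact ⟨mem_univ _, by rw [← this]; exact hp.1⟩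
        · intro p hp q hq h
          rw [Finset.mem_filter] at hp hq
          exact Prod.ext (hp.2.trans hq.2.symm) h
        · intro b hb
          rw [Finset.mem_filter] at hb
          exact ⟨(w, b), Finset.mem_filter.2 ⟨hb.2, rfl⟩, rfl⟩
      rw [hcard, ← Finset.prod_pow_eq_pow_sum]
  have hpu := Finset.prod_univ_sum t (fun (_ : W) (T : Finset Bool) => (X : ℂ[X]) ^ T.card)
  rw [domPoly, key, ← hpu]
  rw [Finset.prod_congr rfl fun w _ => (ht w ▸ hsum_t : (∑ T ∈ t w, (X : ℂ[X]) ^ T.card) = X ^ 2 + 2 * X),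
    Finset.prod_const, Finset.card_univ]

/-- `v` is a leaf with unique neighbor `s`. -/
def IsLeafAt {V : Type} (G : SimpleGraph V) (v s : V) : Prop :=
  G.Adj v s ∧ ∀ u, G.Adj v u → u = s

/-- `v` is a leaf (degree-one vertex). -/
def IsLeaf {V : Type} (G : SimpleGraph V) (v : V) : Prop :=
  ∃ s, IsLeafAt G v s

open Classical in
/-- The support (unique neighbor) of a leaf. -/
noncomputable def sup {V : Type} (G : SimpleGraph V) (v : V) : V :=
  if h : IsLeaf G v then h.choose else v

lemma isLeafAt_sup {G : SimpleGraph V} {v : V} (h : IsLeaf G v) : IsLeafAt G v (sup G v) := by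
  classical
  rw [sup]
  rw [dif_pos h]
  exact h.choose_spec

lemma sup_eq {G : SimpleGraph V} {v s : V} (h : IsLeafAt G v s) : sup G v = s :=
  h.2 _ (isLeafAt_sup ⟨s, h⟩).1

lemma adj_sup {G : SimpleGraph V} {v : V} (h : IsLeaf G v) : G.Adj v (sup G v) :=
  (isLeafAt_sup h).1

lemma sup_ne {G : SimpleGraph V} {v : V} (h : IsLeaf G v) : sup G v ≠ v := by
  intro he
  have := adj_sup h
  rw [he] at this
  exact G.loopless.irrefl v this

lemma adj_leaf_iff {G : SimpleGraph V} {v : V} (h : IsLeaf G v) (u : V) :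
    G.Adj u v ↔ u = sup G v := by
  constructor
  · intro hadj
    exact (isLeafAt_sup h).2 u (G.adj_symm hadj)
  · rintro rfl
    exact G.adj_symm (adj_sup h)

open Classical in
/-- The pendant pairs of `G`. -/
noncomputable def pp {V : Type} [Fintype V] (G : SimpleGraph V) : Finset (Finset V) :=
  (univ.filter fun v => IsLeaf G v).image (fun v => {v, sup G v})

open Classical in
lemma pp_spec {G : SimpleGraph V} {P : Finset V} (h : P ∈ pp G) :
    ∃ ℓ, IsLeaf G ℓ ∧ P = {ℓ, sup G ℓ} := by
  rw [pp, Finset.mem_image] at h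
  obtain ⟨ℓ, hℓ, rfl⟩ := h
  rw [Finset.mem_filter] at hℓ
  exact ⟨ℓ, hℓ.2, rfl⟩

open Classical in
lemma pp_mem {G : SimpleGraph V} {ℓ : V} (h : IsLeaf G ℓ) : {ℓ, sup G ℓ} ∈ pp G := by
  rw [pp, Finset.mem_image]
  exact ⟨ℓ, Finset.mem_filter.2 ⟨Finset.mem_univ _, h⟩, rfl⟩

lemma not_domset_iff {G : SimpleGraph V} {S : Finset V} :
    ¬ G.IsDomSet S ↔ ∃ v, v ∉ S ∧ ∀ u ∈ S, ¬ G.Adj u v := by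
  rw [SimpleGraph.IsDomSet]
  push_neg
  rfl

/-- Ore-type argument: if two distinct leaves share a support, there is a
dominating set of size at most `n - 1`. -/
lemma small_dom_of_shared {G : SimpleGraph V} {n : ℕ} (hcard : Fintype.card V = 2 * n)
    (hδ : ∀ v : V, ∃ u, G.Adj u v) {s ℓ₁ ℓ₂ : V} (hne : ℓ₁ ≠ ℓ₂)
    (hd1 : IsLeafAt G ℓ₁ s) (hd2 : IsLeafAt G ℓ₂ s) :
    ∃ D : Finset V, G.IsDomSet D ∧ D.card ≤ n - 1 := by
  classical
  have hn : 1 ≤ n := by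
    have : 0 < Fintype.card V := Fintype.card_pos_iff.2 ⟨ℓ₁⟩
    omega
  set Dom' : Finset V → Prop :=
    fun S => ∀ v : V, v ≠ ℓ₂ → (v ∈ S ∨ ∃ u ∈ S, u ≠ ℓ₂ ∧ G.Adj u v) with hDom'
  have hAdjs2 : G.Adj ℓ₂ s := hd2.1
  have hAdjs1 : G.Adj ℓ₁ s := hd1.1
  set F : Finset (Finset V) := ((univ.erase ℓ₂).powerset).filter Dom' with hF
  have hFmem : ∀ S, S ∈ F ↔ S ⊆ univ.erase ℓ₂ ∧ Dom' S := by
    intro S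
    rw [hF, Finset.mem_filter, Finset.mem_powerset]
  have hFne : F.Nonempty := by
    refine ⟨univ.erase ℓ₂, (hFmem _).2 ⟨Finset.Subset.refl _, fun v hv => Or.inl ?_⟩⟩
    exact Finset.mem_erase.2 ⟨hv, Finset.mem_univ v⟩
  obtain ⟨D, hDF, hmin⟩ := F.exists_min_image Finset.card hFne
  obtain ⟨hDsub, hDdom⟩ := (hFmem D).1 hDF
  have hDl2 : ℓ₂ ∉ D := fun h => (Finset.mem_erase.1 (hDsub h)).1 rfl
  have hOre : ∀ v ∈ D, ∃ u, u ∉ D ∧ u ≠ ℓ₂ ∧ G.Adj u v := by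
    intro v hv
    by_contra hcon
    push_neg at hcon
    have hvne : v ≠ ℓ₂ := fun h => hDl2 (h ▸ hv)
    obtain ⟨w, hwv, hwne⟩ : ∃ w, G.Adj w v ∧ w ≠ ℓ₂ := by
      obtain ⟨u0, hu0⟩ := hδ v
      by_cases h : u0 = ℓ₂
      · subst h
        have hvs : v = s := hd2.2 v hu0
        exact ⟨ℓ₁, hvs ▸ hAdjs1, hne⟩
      · exact ⟨u0, hu0, h⟩
    have hwD : w ∈ D := by
      by_contra h
      exact hcon w h hwne hwv
    have hwvne : w ≠ v := fun h => G.loopless.irrefl v (h ▸ hwv)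
    have herase : Dom' (D.erase v) := by
      intro x hx
      by_cases hxv : x = v
      · subst hxv
        exact Or.inr ⟨w, Finset.mem_erase.2 ⟨hwvne, hwD⟩, hwne, hwv⟩
      · rcases hDdom x hx with hxD | ⟨u, huD, hune, hadj⟩
        · exact Or.inl (Finset.mem_erase.2 ⟨hxv, hxD⟩)
        · by_cases huv : u = v
          · subst huv
            have hxD : x ∈ D := by
              by_contra h
              exact hcon x h hx (G.adj_symm hadj)
            exact Or.inl (Finset.mem_erase.2 ⟨hxv, hxD⟩)
          · exact Or.inr ⟨u, Finset.mem_erase.2 ⟨huv, huD⟩, hune, hadj⟩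
    have hmem : D.erase v ∈ F :=
      (hFmem _).2 ⟨Finset.Subset.trans (Finset.erase_subset _ _) hDsub, herase⟩
    have := hmin _ hmem
    rw [Finset.card_erase_of_mem hv] at this
    have hpos : 0 < D.card := Finset.card_pos.2 ⟨v, hv⟩
    omega
  set E : Finset V := (univ.erase ℓ₂) \ D with hE
  have hEdom : Dom' E := by
    intro v hv
    by_cases hvD : v ∈ D
    · obtain ⟨u, huD, hune, hadj⟩ := hOre v hvD
      exact Or.inr ⟨u, Finset.mem_sdiff.2
        ⟨Finset.mem_erase.2 ⟨hune, Finset.mem_univ u⟩, huD⟩, hune, hadj⟩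
    · exact Or.inl (Finset.mem_sdiff.2 ⟨Finset.mem_erase.2 ⟨hv, Finset.mem_univ v⟩, hvD⟩)
  have hcards : D.card + E.card = 2 * n - 1 := by
    rw [hE, Finset.card_sdiff_of_subset hDsub, Finset.card_erase_of_mem (Finset.mem_univ _),
      Finset.card_univ, hcard]
    have : D.card ≤ 2 * n - 1 := by
      have := Finset.card_le_card hDsub
      rw [Finset.card_erase_of_mem (Finset.mem_univ _), Finset.card_univ, hcard] at this
      exact this
    omega
  obtain ⟨D₀, hD₀dom, hD₀sub, hD₀card⟩ :
      ∃ D₀ : Finset V, Dom' D₀ ∧ D₀ ⊆ univ.erase ℓ₂ ∧ D₀.card ≤ n - 1 := by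
    by_cases h : D.card ≤ n - 1
    · exact ⟨D, hDdom, hDsub, h⟩
    · exact ⟨E, hEdom, Finset.sdiff_subset, by omega⟩
  by_cases hsD : s ∈ D₀
  · refine ⟨D₀, fun v => ?_, hD₀card⟩
    by_cases hv : v = ℓ₂
    · exact Or.inr ⟨s, hsD, hv ▸ G.adj_symm hAdjs2⟩
    · rcases hD₀dom v hv with h | ⟨u, hu, -, hadj⟩
      · exact Or.inl h
      · exact Or.inr ⟨u, hu, hadj⟩
  · have hl1D : ℓ₁ ∈ D₀ := by
      rcases hD₀dom ℓ₁ hne with h | ⟨u, hu, hune, hadj⟩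
      · exact h
      · have : u = s := hd1.2 u (G.adj_symm hadj)
        exact absurd (this ▸ hu) hsD
    refine ⟨insert s (D₀.erase ℓ₁), fun v => ?_, ?_⟩
    · by_cases hv1 : v = ℓ₁
      · exact Or.inr ⟨s, Finset.mem_insert_self _ _, hv1 ▸ G.adj_symm hAdjs1⟩
      by_cases hv2 : v = ℓ₂
      · exact Or.inr ⟨s, Finset.mem_insert_self _ _, hv2 ▸ G.adj_symm hAdjs2⟩
      by_cases hvs : v = s
      · exact Or.inl (hvs ▸ Finset.mem_insert_self _ _)
      rcases hD₀dom v hv2 with h | ⟨u, hu, hune, hadj⟩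
      · exact Or.inl (Finset.mem_insert_of_mem (Finset.mem_erase.2 ⟨hv1, h⟩))
      · by_cases hu1 : u = ℓ₁
        · subst hu1
          exact absurd (hd1.2 v hadj) hvs
        · exact Or.inr ⟨u, Finset.mem_insert_of_mem (Finset.mem_erase.2 ⟨hu1, hu⟩), hadj⟩
    · have h1 : (D₀.erase ℓ₁).card = D₀.card - 1 := Finset.card_erase_of_mem hl1D
      have h2 : (insert s (D₀.erase ℓ₁)).card ≤ (D₀.erase ℓ₁).card + 1 :=
        Finset.card_insert_le _ _
      have hpos : 0 < D₀.card := Finset.card_pos.2 ⟨ℓ₁, hl1D⟩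
      omega


open Classical in
lemma count_partition (G : SimpleGraph V) (m : ℕ) :
    dcount G m + (univ.filter fun S : Finset V => ¬ G.IsDomSet S ∧ S.card = m).card
      = (Fintype.card V).choose m := by
  have h1 : (univ.filter fun S : Finset V => G.IsDomSet S ∧ S.card = m)
      = ((univ.filter fun S : Finset V => S.card = m).filter fun S => G.IsDomSet S) := by
    rw [Finset.filter_filter]
    apply Finset.filter_congr
    intro S _
    simp [and_comm]
  have h2 : (univ.filter fun S : Finset V => ¬ G.IsDomSet S ∧ S.card = m)
      = ((univ.filter fun S : Finset V => S.card = m).filter fun S => ¬ G.IsDomSet S) := by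
    rw [Finset.filter_filter]
    apply Finset.filter_congr
    intro S _
    simp [and_comm]
  rw [dcount, h1, h2, Finset.card_filter_add_card_filter_not, total_count]

open Classical in
lemma nd_card_eq_pp_card (G : SimpleGraph V) {n : ℕ} (hcard : Fintype.card V = 2 * n)
    (hn : 1 ≤ n) (hδ : ∀ v : V, ∃ u, G.Adj u v) :
    (univ.filter fun S : Finset V => ¬ G.IsDomSet S ∧ S.card = 2 * n - 2).card
      = (pp G).card := by
  apply Finset.card_bij (i := fun S _ => Sᶜ)
  · intro S hS
    rw [Finset.mem_filter] at hS
    obtain ⟨-, hnd, hcardS⟩ := hS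
    obtain ⟨v, hv, hall⟩ := not_domset_iff.1 hnd
    have hcompl : Sᶜ.card = 2 := by
      rw [Finset.card_compl, hcardS, hcard]
      omega
    have hvS : v ∈ Sᶜ := Finset.mem_compl.2 hv
    obtain ⟨u, hu⟩ := hδ v
    have huS : u ∈ Sᶜ := Finset.mem_compl.2 fun h => hall u h hu
    have huv : u ≠ v := hu.ne
    have hpair : ({v, u} : Finset V) ⊆ Sᶜ := by
      intro x hx
      rcases Finset.mem_insert.1 hx with rfl | hx
      · exact hvS
      · rwa [Finset.mem_singleton.1 hx]
    have hSc : Sᶜ = {v, u} := by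
      refine (Finset.eq_of_subset_of_card_le hpair ?_).symm
      rw [hcompl, Finset.card_pair (Ne.symm huv)]
    have hleaf : IsLeafAt G v u := by
      refine ⟨G.adj_symm hu, fun w hw => ?_⟩
      have hwS : w ∈ Sᶜ := Finset.mem_compl.2 fun h => hall w h (G.adj_symm hw)
      rw [hSc, Finset.mem_insert, Finset.mem_singleton] at hwS
      rcases hwS with h1 | h1
      · exact absurd (h1 ▸ hw) (G.loopless.irrefl v)
      · exact h1
    have : Sᶜ = {v, sup G v} := by
      rw [hSc, sup_eq hleaf]
    rw [this]
    exact pp_mem ⟨u, hleaf⟩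
  · intro S hS T hT h
    have : Sᶜᶜ = Tᶜᶜ := by rw [h]
    rwa [compl_compl, compl_compl] at this
  · intro P hP
    obtain ⟨ℓ, hℓ, rfl⟩ := pp_spec hP
    have hne : ℓ ≠ sup G ℓ := (sup_ne hℓ).symm
    have hcardP : ({ℓ, sup G ℓ} : Finset V).card = 2 := Finset.card_pair hne
    refine ⟨{ℓ, sup G ℓ}ᶜ, Finset.mem_filter.2 ⟨Finset.mem_univ _, ?_, ?_⟩, compl_compl _⟩
    · rw [not_domset_iff]
      have hl : ℓ ∉ ({ℓ, sup G ℓ} : Finset V)ᶜ := by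
        rw [Finset.mem_compl, not_not]
        exact Finset.mem_insert_self _ _
      refine ⟨ℓ, hl, fun u hu hadj => ?_⟩
      rw [adj_leaf_iff hℓ] at hadj
      rw [Finset.mem_compl] at hu
      refine hu ?_
      rw [hadj]
      exact Finset.mem_insert_of_mem (Finset.mem_singleton_self _)
    · rw [Finset.card_compl, hcardP, hcard]

section CoronaAdj

variable {W : Type}

lemma corona_adj_ff (H : SimpleGraph W) (P Q : W) :
    (coronaK1 H).Adj (P, false) (Q, false) ↔ H.Adj P Q := by
  rw [coronaK1, SimpleGraph.fromRel_adj]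
  constructor
  · rintro ⟨hne, (⟨-, -, h⟩ | ⟨-, -, h2⟩) | (⟨-, -, h⟩ | ⟨-, -, h2⟩)⟩
    · exact h
    · exact absurd h2 (by simp)
    · exact H.adj_symm h
    · exact absurd h2 (by simp)
  · intro h
    refine ⟨fun hPQ => H.loopless.irrefl P ?_, Or.inl (Or.inl ⟨rfl, rfl, h⟩)⟩
    have : P = Q := congrArg Prod.fst hPQ
    rw [this] at h ⊢
    exact h

lemma corona_adj_ft (H : SimpleGraph W) (P Q : W) :
    (coronaK1 H).Adj (P, false) (Q, true) ↔ P = Q := by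
  rw [coronaK1, SimpleGraph.fromRel_adj]
  constructor
  · rintro ⟨hne, (⟨-, h2, -⟩ | ⟨h, -, -⟩) | (⟨h2, -, -⟩ | ⟨-, h2, -⟩)⟩
    · exact absurd h2 (by simp)
    · exact h
    · exact absurd h2 (by simp)
    · exact absurd h2 (by simp)
  · rintro rfl
    exact ⟨by simp, Or.inl (Or.inr ⟨rfl, rfl, rfl⟩)⟩

lemma corona_adj_tt (H : SimpleGraph W) (P Q : W) :
    ¬ (coronaK1 H).Adj (P, true) (Q, true) := by
  rw [coronaK1, SimpleGraph.fromRel_adj]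
  rintro ⟨hne, (⟨h2, -, -⟩ | ⟨-, h2, -⟩) | (⟨h2, -, -⟩ | ⟨-, h2, -⟩)⟩ <;> simp at h2

end CoronaAdj

open Classical in
lemma domPoly_iso {V₁ V₂ : Type} [Fintype V₁] [Fintype V₂] (G₁ : SimpleGraph V₁)
    (G₂ : SimpleGraph V₂) (f : G₁ ≃g G₂) : domPoly G₁ = domPoly G₂ := by
  rw [domPoly, domPoly]
  apply Finset.sum_nbij' (i := fun S => S.map f.toEquiv.toEmbedding)
    (j := fun S => S.map f.toEquiv.symm.toEmbedding)
  · intro S hS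
    rw [Finset.mem_filter] at hS ⊢
    refine ⟨Finset.mem_univ _, fun v => ?_⟩
    rcases hS.2 (f.toEquiv.symm v) with h | ⟨u, hu, hadj⟩
    · refine Or.inl (Finset.mem_map.2 ⟨_, h, ?_⟩)
      exact f.toEquiv.apply_symm_apply v
    · refine Or.inr ⟨f.toEquiv u, Finset.mem_map.2 ⟨u, hu, rfl⟩, ?_⟩
      have h2 : G₂.Adj (f.toEquiv u) (f.toEquiv (f.toEquiv.symm v)) := f.map_adj_iff.2 hadj
      rwa [f.toEquiv.apply_symm_apply v] at h2
  · intro S hS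
    rw [Finset.mem_filter] at hS ⊢
    refine ⟨Finset.mem_univ _, fun v => ?_⟩
    rcases hS.2 (f.toEquiv v) with h | ⟨u, hu, hadj⟩
    · refine Or.inl (Finset.mem_map.2 ⟨_, h, ?_⟩)
      exact f.toEquiv.symm_apply_apply v
    · refine Or.inr ⟨f.toEquiv.symm u, Finset.mem_map.2 ⟨u, hu, rfl⟩, ?_⟩
      have h2 : G₂.Adj (f.toEquiv (f.toEquiv.symm u)) (f.toEquiv v) := by
        rwa [f.toEquiv.apply_symm_apply u]
      exact f.map_adj_iff.1 h2
  · intro S hS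
    ext a
    simp only [Finset.mem_map, Equiv.coe_toEmbedding]
    constructor
    · rintro ⟨b, ⟨c, hc, rfl⟩, rfl⟩
      rwa [Equiv.symm_apply_apply]
    · intro ha
      exact ⟨f.toEquiv a, ⟨a, ha, rfl⟩, Equiv.symm_apply_apply _ _⟩
  · intro S hS
    ext a
    simp only [Finset.mem_map, Equiv.coe_toEmbedding]
    constructor
    · rintro ⟨b, ⟨c, hc, rfl⟩, rfl⟩
      rwa [Equiv.apply_symm_apply]
    · intro ha
      exact ⟨f.toEquiv.symm a, ⟨a, ha, rfl⟩, Equiv.apply_symm_apply _ _⟩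
  · intro S hS
    rw [Finset.card_map]

open Classical in
lemma dcount_pos_of_dom (G : SimpleGraph V) {i : ℕ} (S : Finset V) (hS : G.IsDomSet S)
    (hSc : S.card = i) : 0 < dcount G i := by
  rw [dcount]
  exact Finset.card_pos.2 ⟨S, Finset.mem_filter.2 ⟨Finset.mem_univ _, hS, hSc⟩⟩

open Classical in
lemma all_dom_of_dcount (G : SimpleGraph V) {i : ℕ}
    (h : dcount G i = (Fintype.card V).choose i) :
    ∀ S : Finset V, S.card = i → G.IsDomSet S := by
  intro S hS
  have hsub : (univ.filter fun S : Finset V => G.IsDomSet S ∧ S.card = i)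
      ⊆ (univ.filter fun S : Finset V => S.card = i) := by
    intro T hT
    rw [Finset.mem_filter] at hT ⊢
    exact ⟨hT.1, hT.2.2⟩
  have heq := Finset.eq_of_subset_of_card_le hsub
    (by rw [total_count, ← h]; rw [dcount])
  have hSB : S ∈ (univ.filter fun S : Finset V => S.card = i) :=
    Finset.mem_filter.2 ⟨Finset.mem_univ _, hS⟩
  rw [← heq, Finset.mem_filter] at hSB
  exact hSB.2.1

open Classical in
/-- Construct the corona structure from a perfect matching of pendant pairs. -/
lemma corona_iso_of_pp (G : SimpleGraph V) {n : ℕ} (hcard : Fintype.card V = 2 * n)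
    (hppcard : (pp G).card = n)
    (hdisj : ∀ P ∈ pp G, ∀ Q ∈ pp G, P ≠ Q → Disjoint P Q) :
    ∃ (W : Type) (_ : Fintype W) (H : SimpleGraph W),
      Fintype.card W = n ∧ Nonempty (G ≃g coronaK1 H) := by
  have hcard2 : ∀ P ∈ pp G, P.card = 2 := by
    intro P hP
    obtain ⟨ℓ, hℓ, rfl⟩ := pp_spec hP
    exact Finset.card_pair (sup_ne hℓ).symm
  have hcover : (pp G).biUnion (fun P => P) = univ := by
    have hsub : (pp G).biUnion (fun P => P) ⊆ univ := Finset.subset_univ _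
    refine Finset.eq_of_subset_of_card_le hsub ?_
    rw [Finset.card_biUnion (fun P hP Q hQ hne => hdisj P hP Q hQ hne)]
    rw [Finset.card_univ, hcard]
    calc (2 : ℕ) * n = (pp G).card * 2 := by rw [hppcard]; ring
    _ = ∑ _P ∈ pp G, 2 := by rw [Finset.sum_const, smul_eq_mul]
    _ ≤ ∑ P ∈ pp G, P.card := by
        apply Finset.sum_le_sum
        intro P hP
        rw [hcard2 P hP]
  have huniq : ∀ v : V, ∀ P ∈ pp G, ∀ Q ∈ pp G, v ∈ P → v ∈ Q → P = Q := by
    intro v P hP Q hQ hvP hvQ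
    by_contra h
    exact Finset.disjoint_left.1 (hdisj P hP Q hQ h) hvP hvQ
  have hex : ∀ v : V, ∃ P, P ∈ pp G ∧ v ∈ P := by
    intro v
    have : v ∈ (pp G).biUnion (fun P => P) := hcover.symm ▸ Finset.mem_univ v
    simpa using Finset.mem_biUnion.1 this
  set pairOf : V → {P // P ∈ pp G} := fun v => ⟨(hex v).choose, (hex v).choose_spec.1⟩
    with hpairOf
  have hmemPair : ∀ v, v ∈ (pairOf v).1 := fun v => (hex v).choose_spec.2
  have hpairOf_eq : ∀ (v) (P : {P // P ∈ pp G}), v ∈ P.1 → pairOf v = P := fun v P hv =>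
    Subtype.ext (huniq v _ (pairOf v).2 _ P.2 (hmemPair v) hv)
  set lf : {P // P ∈ pp G} → V := fun P => (pp_spec P.2).choose with hlf
  have hlf_spec : ∀ P : {P // P ∈ pp G}, IsLeaf G (lf P) ∧ P.1 = {lf P, sup G (lf P)} :=
    fun P => (pp_spec P.2).choose_spec
  set rf : {P // P ∈ pp G} → V := fun P => sup G (lf P) with hrf
  have hPval : ∀ P : {P // P ∈ pp G}, P.1 = {lf P, rf P} := fun P => (hlf_spec P).2
  have hlfleaf : ∀ P, IsLeaf G (lf P) := fun P => (hlf_spec P).1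
  have hlr_ne : ∀ P, lf P ≠ rf P := fun P => (sup_ne (hlfleaf P)).symm
  have hlf_mem : ∀ P : {P // P ∈ pp G}, lf P ∈ P.1 := fun P => by
    rw [hPval]
    exact Finset.mem_insert_self _ _
  have hrf_mem : ∀ P : {P // P ∈ pp G}, rf P ∈ P.1 := fun P => by
    rw [hPval]
    exact Finset.mem_insert_of_mem (Finset.mem_singleton_self _)
  have hpair_lf : ∀ P, pairOf (lf P) = P := fun P => hpairOf_eq _ P (hlf_mem P)
  have hpair_rf : ∀ P, pairOf (rf P) = P := fun P => hpairOf_eq _ P (hrf_mem P)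
  have hadj_lf : ∀ (P : {P // P ∈ pp G}) (u : V), G.Adj u (lf P) ↔ u = rf P := fun P u =>
    adj_leaf_iff (hlfleaf P) u
  have hmem_ne : ∀ (P Q : {P // P ∈ pp G}) (a b : V), P ≠ Q → a ∈ P.1 → b ∈ Q.1 → a ≠ b := by
    intro P Q a b hPQ ha hb heq
    exact Finset.disjoint_left.1 (hdisj P.1 P.2 Q.1 Q.2 (fun h => hPQ (Subtype.ext h))) ha
      (heq ▸ hb)
  set H : SimpleGraph {P // P ∈ pp G} :=
    { Adj := fun P Q => G.Adj (rf P) (rf Q)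
      symm := ⟨fun P Q h => G.adj_symm h⟩
      loopless := ⟨fun P h => G.loopless.irrefl _ h⟩ } with hH
  set e : V → {P // P ∈ pp G} × Bool :=
    fun v => (pairOf v, if v = rf (pairOf v) then false else true) with he
  set einv : {P // P ∈ pp G} × Bool → V := fun x => if x.2 then lf x.1 else rf x.1 with heinv
  have hcases : ∀ v, v = lf (pairOf v) ∨ v = rf (pairOf v) := by
    intro v
    have h := hmemPair v
    rw [hPval (pairOf v), Finset.mem_insert, Finset.mem_singleton] at h
    exact h
  have hea_leaf : ∀ v, v = lf (pairOf v) → e v = (pairOf v, true) := by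
    intro v h
    simp only [he]
    rw [if_neg (fun hc => hlr_ne (pairOf v) (h.symm.trans hc))]
  have hea_rep : ∀ v, v = rf (pairOf v) → e v = (pairOf v, false) := by
    intro v h
    simp only [he]
    rw [if_pos h]
  have hli : ∀ v, einv (e v) = v := by
    intro v
    rcases hcases v with h | h
    · rw [hea_leaf v h]
      simp only [heinv]
      exact h.symm
    · rw [hea_rep v h]
      simp only [heinv]
      exact h.symm
  have hri : ∀ x, e (einv x) = x := by
    rintro ⟨P, b⟩
    cases b
    · have h0 : einv (P, false) = rf P := by simp [heinv]
      rw [h0, hea_rep (rf P) (by rw [hpair_rf P])]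
      rw [hpair_rf P]
    · have h0 : einv (P, true) = lf P := by simp [heinv]
      rw [h0, hea_leaf (lf P) (by rw [hpair_lf P])]
      rw [hpair_lf P]
  have hmapadj : ∀ a b : V, (coronaK1 H).Adj (e a) (e b) ↔ G.Adj a b := by
    intro a b
    rcases hcases a with ha | ha <;> rcases hcases b with hb | hb
    · -- both leaves
      rw [hea_leaf a ha, hea_leaf b hb]
      constructor
      · intro h
        exact absurd h (corona_adj_tt H _ _)
      · intro h
        exfalso
        rw [hb] at h
        have h1 : a = rf (pairOf b) := (hadj_lf (pairOf b) a).1 h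
        by_cases hPQ : pairOf a = pairOf b
        · apply hlr_ne (pairOf b)
          rw [← h1, ← hPQ, ← ha]
        · exact hmem_ne _ _ a (rf (pairOf b)) hPQ (hmemPair a) (hrf_mem _) h1
    · -- a leaf, b rep
      rw [hea_leaf a ha, hea_rep b hb, (coronaK1 H).adj_comm, corona_adj_ft]
      constructor
      · intro h
        have hb' : b = rf (pairOf a) := by rw [← h]; exact hb
        apply G.adj_symm
        rw [ha, hadj_lf (pairOf a) b]
        exact hb'
      · intro h
        have h1 : G.Adj b (lf (pairOf a)) := by
          rw [← ha]
          exact G.adj_symm h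
        have h2 : b = rf (pairOf a) := (hadj_lf (pairOf a) b).1 h1
        apply hpairOf_eq b (pairOf a)
        rw [h2]
        exact hrf_mem _
    · -- a rep, b leaf
      rw [hea_rep a ha, hea_leaf b hb, corona_adj_ft]
      constructor
      · intro h
        rw [hb, hadj_lf (pairOf b) a, ← h]
        exact ha
      · intro h
        have h1 : G.Adj a (lf (pairOf b)) := by
          rw [← hb]
          exact h
        have h2 : a = rf (pairOf b) := (hadj_lf (pairOf b) a).1 h1
        have h3 : pairOf a = pairOf b := by
          apply hpairOf_eq a (pairOf b)
          rw [h2]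
          exact hrf_mem _
        exact h3
    · -- both reps
      rw [hea_rep a ha, hea_rep b hb, corona_adj_ff]
      have hHadj : H.Adj (pairOf a) (pairOf b) ↔ G.Adj (rf (pairOf a)) (rf (pairOf b)) :=
        Iff.rfl
      rw [hHadj, ← ha, ← hb]
  refine ⟨{P // P ∈ pp G}, inferInstance, H, ?_, ⟨⟨⟨e, einv, hli, hri⟩, ?_⟩⟩⟩
  · exact hppcard ▸ Fintype.card_coe (pp G)
  · intro a b
    exact hmapadj a b

end CoronaAux

open CoronaAux in
/-- For a finite graph `G` on `2n` vertices, `D(G,x) = (x²+2x)ⁿ` if and only if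
`G ≅ H ∘ K₁` for some graph `H` of order `n`. -/
theorem domPoly_eq_iff_corona {V : Type} [Fintype V] (G : SimpleGraph V) (n : ℕ)
    (hcard : Fintype.card V = 2 * n) :
    domPoly G = (X ^ 2 + 2 * X) ^ n ↔
      ∃ (W : Type) (_ : Fintype W) (H : SimpleGraph W),
        Fintype.card W = n ∧ Nonempty (G ≃g coronaK1 H) := by
  classical
  constructor
  · intro hpoly
    rcases Nat.eq_zero_or_pos n with hn0 | hn
    · subst hn0
      rw [mul_zero] at hcard
      haveI hVempty : IsEmpty V := Fintype.card_eq_zero_iff.1 hcard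
      refine ⟨Empty, inferInstance, ⊥, by simp, ⟨⟨Equiv.equivOfIsEmpty V (Empty × Bool), ?_⟩⟩⟩
      exact fun {a b} => isEmptyElim a
    · have hc : ∀ i, ((dcount G i : ℕ) : ℂ) = (((X : ℂ[X]) ^ 2 + 2 * X) ^ n).coeff i := by
        intro i
        rw [← domPoly_coeff, hpoly]
      have d2 : dcount G (n - 1) = 0 := by
        have h := hc (n - 1)
        rw [rhs_coeff_lt n (n - 1) (by omega)] at h
        exact_mod_cast h
      have hγ : ∀ S : Finset V, G.IsDomSet S → n ≤ S.card := by
        intro S hS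
        by_contra hlt
        push_neg at hlt
        obtain ⟨T, hST, hTu, hTcard⟩ := Finset.exists_subsuperset_card_eq
          (Finset.subset_univ S) (show S.card ≤ n - 1 by omega)
          (by rw [Finset.card_univ, hcard]; omega)
        have hTdom := domset_mono hST hS
        have := dcount_pos_of_dom G T hTdom hTcard
        omega
      have hch1 : n.choose (n - 1) = n := by
        have h1 : n - (n - 1) = 1 := by omega
        have h2 := Nat.choose_symm (show n - 1 ≤ n by omega)
        rw [h1, Nat.choose_one_right] at h2
        exact h2.symm
      have d1 : dcount G (2 * n - 1) = 2 * n := by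
        have h := hc (2 * n - 1)
        have he : 2 * n - 1 = n + (n - 1) := by omega
        rw [he, rhs_coeff_add] at h
        have h3 : n - (n - 1) = 1 := by omega
        rw [h3, hch1, pow_one] at h
        rw [he]
        exact_mod_cast h
      have hall : ∀ S : Finset V, S.card = 2 * n - 1 → G.IsDomSet S := by
        apply all_dom_of_dcount
        rw [d1, hcard]
        have h2 := Nat.choose_symm (show 2 * n - 1 ≤ 2 * n by omega)
        have h3 : 2 * n - (2 * n - 1) = 1 := by omega
        rw [h3, Nat.choose_one_right] at h2
        exact h2
      have hδ : ∀ v : V, ∃ u, G.Adj u v := by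
        intro v
        have hS : (Finset.univ.erase v).card = 2 * n - 1 := by
          rw [Finset.card_erase_of_mem (Finset.mem_univ v), Finset.card_univ, hcard]
        rcases hall _ hS v with hv | ⟨u, hu, hadj⟩
        · exact absurd hv (Finset.notMem_erase v Finset.univ)
        · exact ⟨u, hadj⟩
      have d3 : dcount G (2 * n - 2) = 2 * n * (n - 1) := by
        rcases Nat.lt_or_ge n 2 with h2 | h2
        · have hn1 : n = 1 := by omega
          subst hn1
          simpa using d2
        · have h := hc (2 * n - 2)
          have he : 2 * n - 2 = n + (n - 2) := by omega
          rw [he, rhs_coeff_add] at h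
          have h3 : n - (n - 2) = 2 := by omega
          rw [h3, Nat.choose_symm (show 2 ≤ n from h2)] at h
          have h4 : 2 * n.choose 2 = n * (n - 1) := by
            rw [Nat.choose_two_right]
            exact Nat.mul_div_cancel' (Nat.even_mul_pred_self n).two_dvd
          have hval : 2 * n * (n - 1) = 4 * n.choose 2 := by
            calc 2 * n * (n - 1) = 2 * (n * (n - 1)) := by ring
            _ = 2 * (2 * n.choose 2) := by rw [h4]
            _ = 4 * n.choose 2 := by ring
          rw [he, hval]
          have h5 : ((2 : ℂ) ^ 2 * (n.choose 2 : ℂ)) = ((4 * n.choose 2 : ℕ) : ℂ) := by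
            push_cast
            ring
          rw [h5] at h
          exact_mod_cast h
      have hnd := nd_card_eq_pp_card G hcard hn hδ
      have hpart := count_partition G (2 * n - 2)
      have hchoose2 : (Fintype.card V).choose (2 * n - 2) = n * (2 * n - 1) := by
        rw [hcard]
        have h2 := Nat.choose_symm (show 2 * n - 2 ≤ 2 * n by omega)
        have h3 : 2 * n - (2 * n - 2) = 2 := by omega
        rw [h3] at h2
        rw [← h2, Nat.choose_two_right]
        have h4 : 2 * n * (2 * n - 1) = 2 * (n * (2 * n - 1)) := by ring
        rw [h4, Nat.mul_div_cancel_left _ (by norm_num : (0:ℕ) < 2)]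
      have hppn : (pp G).card = n := by
        rw [hnd, d3, hchoose2] at hpart
        have hiden : n * (2 * n - 1) = 2 * n * (n - 1) + n := by
          obtain ⟨m, rfl⟩ : ∃ m, n = m + 1 := ⟨n - 1, by omega⟩
          have e1 : 2 * (m + 1) - 1 = 2 * m + 1 := by omega
          have e2 : (m + 1) - 1 = m := by omega
          rw [e1, e2]
          ring
        omega
      have hdisj : ∀ P ∈ pp G, ∀ Q ∈ pp G, P ≠ Q → Disjoint P Q := by
        intro P hP Q hQ hne
        by_contra hnd2
        obtain ⟨x, hxP, hxQ⟩ := Finset.not_disjoint_iff.1 hnd2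
        obtain ⟨ℓ₁, hl1, rfl⟩ := pp_spec hP
        obtain ⟨ℓ₂, hl2, rfl⟩ := pp_spec hQ
        rw [Finset.mem_insert, Finset.mem_singleton] at hxP hxQ
        have hll : ℓ₁ ≠ ℓ₂ := fun h => hne (by rw [h])
        rcases hxP with h1 | h1 <;> rcases hxQ with h2 | h2
        · exact hll (h1.symm.trans h2)
        · have h : ℓ₁ = sup G ℓ₂ := h1.symm.trans h2
          have hadj : G.Adj ℓ₂ ℓ₁ := by
            rw [h]
            exact adj_sup hl2
          have hs : ℓ₂ = sup G ℓ₁ := (adj_leaf_iff hl1 ℓ₂).1 hadj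
          apply hne
          rw [← hs, ← h]
          exact Finset.pair_comm ℓ₁ ℓ₂
        · have h : sup G ℓ₁ = ℓ₂ := h1.symm.trans h2
          have hadj : G.Adj ℓ₁ ℓ₂ := by
            rw [← h]
            exact adj_sup hl1
          have hs : ℓ₁ = sup G ℓ₂ := (adj_leaf_iff hl2 ℓ₁).1 hadj
          apply hne
          rw [h, ← hs]
          exact Finset.pair_comm ℓ₁ ℓ₂
        · have h : sup G ℓ₁ = sup G ℓ₂ := h1.symm.trans h2
          have hL1 : IsLeafAt G ℓ₁ (sup G ℓ₁) := isLeafAt_sup hl1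
          have hL2 : IsLeafAt G ℓ₂ (sup G ℓ₁) := by
            rw [h]
            exact isLeafAt_sup hl2
          obtain ⟨D, hDdom, hDcard⟩ := small_dom_of_shared hcard hδ hll hL1 hL2
          have := hγ D hDdom
          omega
      exact corona_iso_of_pp G hcard hppn hdisj
  · rintro ⟨W, hFW, H, hcW, ⟨iso⟩⟩
    rw [domPoly_iso G (coronaK1 H) iso, domPoly_corona]
    rw [hcW]
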